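/- arXiv:1402.3086 — 3 statements merged into one kernel-verified Lean document; each statement's English description precedes it below -/
import Mathlib

section
/- Let N ≥ 2 be an integer and 1 < p < N; set q = p, so γ = q/(q−(p−1)) = p. Let c_p = (p−1)^{p−1}, Λ_p = ((N−p)/p)^p, 0 ≤ λ < c_p·Λ_p, and let β ∈ [0,(N−p)/p) be the unique solution of −(p−1)β^p + (N−p)β^{p−1} = λ/c_p. For R > 0 define v(r) = (p−1)·β·log(R/r) on (0,R). Then v satisfies −(−v'(r))^{p−2}·((p−1)v''(r) + ((N−1)/r)·v'(r)) = (−v'(r))^p + λ/r^p for all r ∈ (0,R). -/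
/-- for `1 < p < N`, `q = p` (so `γ = p`), `0 ≤ λ < c_p Λ_p` and
`β ∈ [0,(N−p)/p)` the solution of `−(p−1)β^p + (N−p)β^{p−1} = λ/c_p`, the function
`v(r) = (p−1)β log(R/r)` satisfies
`−(−v')^{p−2}((p−1)v'' + ((N−1)/r)v') = (−v')^p + λ/r^p` on `(0,R)`. -/
theorem stmt11 (N : ℕ) (hN : 2 ≤ N) (p : ℝ) (hp1 : 1 < p) (hpN : p < N)
    (lam β R : ℝ) (hlam0 : 0 ≤ lam)
    (hlam : lam < (p - 1) ^ (p - 1) * (((N : ℝ) - p) / p) ^ p)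
    (hβmem : β ∈ Set.Ico 0 (((N : ℝ) - p) / p))
    (hβeq : -(p - 1) * β ^ p + ((N : ℝ) - p) * β ^ (p - 1) = lam / (p - 1) ^ (p - 1))
    (hR : 0 < R)
    (v : ℝ → ℝ) (hv : v = fun r : ℝ => (p - 1) * β * Real.log (R / r)) :
    ∀ r ∈ Set.Ioo 0 R,
      -((-deriv v r) ^ (p - 2)) *
          ((p - 1) * deriv (deriv v) r + (((N : ℝ) - 1) / r) * deriv v r) =
        (-deriv v r) ^ p + lam / r ^ p := by
  obtain ⟨hβ0, hβlt⟩ := hβmem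
  have hp0 : (0:ℝ) < p - 1 := by linarith
  set c : ℝ := (p - 1) * β with hc
  have hc0 : 0 ≤ c := mul_nonneg hp0.le hβ0
  -- first derivative
  have hder : ∀ s : ℝ, 0 < s → HasDerivAt v (-c / s) s := by
    intro s hs
    have h1 : HasDerivAt (fun r : ℝ => c * Real.log R - c * Real.log r) (-c / s) s := by
      have h2 := (Real.hasDerivAt_log hs.ne').const_mul c
      have heq : -c / s = 0 - c * s⁻¹ := by ring
      rw [heq]
      exact (hasDerivAt_const s (c * Real.log R)).sub h2
    refine h1.congr_of_eventuallyEq ?_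
    filter_upwards [eventually_gt_nhds hs] with x hx
    rw [hv]
    simp only
    rw [Real.log_div hR.ne' hx.ne']
    ring
  have hdv : ∀ s : ℝ, 0 < s → deriv v s = -c / s := fun s hs => (hder s hs).deriv
  intro r hr
  obtain ⟨hr0, hrR⟩ := hr
  -- second derivative
  have hdd : deriv (deriv v) r = c / (r * r) := by
    have h1 : HasDerivAt (fun s : ℝ => -c / s) (c / (r * r)) r := by
      have h2 := (hasDerivAt_inv hr0.ne').const_mul (-c)
      have heq : c / (r * r) = -c * -(r ^ 2)⁻¹ := by
        rw [pow_two]; ring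
      rw [heq]
      simpa [div_eq_mul_inv] using h2
    have h4 : deriv v =ᶠ[nhds r] fun s : ℝ => -c / s := by
      filter_upwards [eventually_gt_nhds hr0] with x hx
      exact hdv x hx
    rw [h4.deriv_eq]
    exact h1.deriv
  rw [hdv r hr0, hdd]
  have hnn : -(-c / r) = c / r := by ring
  rw [hnn]
  rcases eq_or_lt_of_le hβ0 with h0 | hβpos
  · -- β = 0 case
    have hc' : c = 0 := by rw [hc, ← h0, mul_zero]
    have hlamz : lam = 0 := by
      have hA : (0:ℝ) < (p - 1) ^ (p - 1) := Real.rpow_pos_of_pos hp0 _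
      rw [← h0, Real.zero_rpow (by linarith : p ≠ 0), Real.zero_rpow hp0.ne'] at hβeq
      have h5 : lam / (p - 1) ^ (p - 1) = 0 := by linarith
      field_simp at h5
      simpa using h5
    rw [hc', hlamz]
    simp [Real.zero_rpow (by linarith : p ≠ 0)]
  · -- β > 0 case
    have hcpos : 0 < c := mul_pos hp0 hβpos
    have hx : 0 < c / r := div_pos hcpos hr0
    -- key scalar identity
    have hA : (0:ℝ) < (p - 1) ^ (p - 1) := Real.rpow_pos_of_pos hp0 _
    have hlam' : lam = (p - 1) ^ (p - 1) * (-(p - 1) * β ^ p + ((N : ℝ) - p) * β ^ (p - 1)) := by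
      rw [hβeq]; field_simp
    have hcp : c ^ p = (p - 1) ^ p * β ^ p := Real.mul_rpow hp0.le hβ0
    have hcp1 : c ^ (p - 1) = (p - 1) ^ (p - 1) * β ^ (p - 1) := Real.mul_rpow hp0.le hβ0
    have hpp : (p - 1) ^ p = (p - 1) ^ (p - 1) * (p - 1) := by
      rw [← Real.rpow_add_one hp0.ne' (p - 1)]
      norm_num
    have key : c ^ (p - 1) * ((N : ℝ) - p) = c ^ p + lam := by
      rw [hcp, hcp1, hpp, hlam']; ring
    -- rewrite powers
    have hxp2 : (c / r) ^ (p - 2) * (c / r) = (c / r) ^ (p - 1) := by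
      rw [show p - 1 = (p - 2) + 1 by ring, Real.rpow_add_one hx.ne']
    have hdivp1 : (c / r) ^ (p - 1) = c ^ (p - 1) / r ^ (p - 1) :=
      Real.div_rpow hc0 hr0.le (p - 1)
    have hdivp : (c / r) ^ p = c ^ p / r ^ p :=
      Real.div_rpow hc0 hr0.le p
    have hrp : r ^ (p - 1) * r = r ^ p := by
      rw [← Real.rpow_add_one hr0.ne' (p - 1)]
      norm_num
    have hrpos : (0:ℝ) < r ^ p := Real.rpow_pos_of_pos hr0 _
    have hrp1pos : (0:ℝ) < r ^ (p - 1) := Real.rpow_pos_of_pos hr0 _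
    -- LHS computation
    have e1 : (p - 1) * (c / (r * r)) + (((N : ℝ) - 1) / r) * (-c / r)
        = -(((N : ℝ) - p) * c / (r * r)) := by
      field_simp; ring
    rw [e1]
    have e2 : -(c / r) ^ (p - 2) * -(((N : ℝ) - p) * c / (r * r))
        = (c / r) ^ (p - 2) * (c / r) * (((N : ℝ) - p) / r) := by
      field_simp
    rw [e2, hxp2, hdivp1, hdivp, ← add_div, ← key, ← hrp]
    field_simp
end

section
/- Let N ≥ 2 be an integer, 1 < p < N, p−1 < q ≤ p, γ = q/(q−(p−1)), c_γ = (γ−1)^{γ−1}, λ ≥ 0, R > 0. Let v ∈ C²((0,R)) with v'(r) < 0 for all r ∈ (0,R), suppose that ∫_r^R (−v'(τ))^{q−(p−1)} dτ is finite for every r ∈ (0,R), and that v satisfies −(−v'(r))^{p−2}·((p−1)v''(r) + ((N−1)/r)·v'(r)) = (−v'(r))^q + λ/r^γ on (0,R). Define V(r) = exp( (1/(γ−1)) ∫_r^R (−v'(τ))^{q−(p−1)} dτ ) − 1 for r ∈ (0,R). Then V satisfies −|V'(r)|^{γ−2}·((γ−1)V''(r) + ((N−1)/r)·V'(r)) =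 (λ/c_γ)·(V(r)+1)^{γ−1}/r^γ on (0,R). -/
set_option maxHeartbeats 2000000


open MeasureTheory

/-- if `v ∈ C²((0,R))` is decreasing, solves the radial `p`-problem
`−(−v')^{p−2}((p−1)v'' + ((N−1)/r)v') = (−v')^q + λ/r^γ`, and
`∫_r^R (−v')^{q−(p−1)}` is finite, then
`V(r) = exp((1/(γ−1)) ∫_r^R (−v'(τ))^{q−(p−1)} dτ) − 1` solves the radial `γ`-problem
`−|V'|^{γ−2}((γ−1)V'' + ((N−1)/r)V') = (λ/c_γ)(V+1)^{γ−1}/r^γ` on `(0,R)`. -/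
theorem stmt12 (N : ℕ) (hN : 2 ≤ N) (p q γ lam R : ℝ)
    (hp1 : 1 < p) (hpN : p < N) (hq1 : p - 1 < q) (hq2 : q ≤ p)
    (hγ : γ = q / (q - (p - 1))) (hlam : 0 ≤ lam) (hR : 0 < R)
    (v : ℝ → ℝ) (hv : ContDiffOn ℝ 2 v (Set.Ioo 0 R))
    (hv' : ∀ r ∈ Set.Ioo 0 R, deriv v r < 0)
    (hint : ∀ r ∈ Set.Ioo 0 R,
      IntervalIntegrable (fun τ => (-deriv v τ) ^ (q - (p - 1))) volume r R)
    (hode : ∀ r ∈ Set.Ioo 0 R,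
      -((-deriv v r) ^ (p - 2)) *
          ((p - 1) * deriv (deriv v) r + (((N : ℝ) - 1) / r) * deriv v r) =
        (-deriv v r) ^ q + lam / r ^ γ)
    (V : ℝ → ℝ)
    (hV : ∀ r ∈ Set.Ioo 0 R,
      V r = Real.exp ((1 / (γ - 1)) * ∫ τ in r..R, (-deriv v τ) ^ (q - (p - 1))) - 1) :
    ∀ r ∈ Set.Ioo 0 R,
      -(|deriv V r| ^ (γ - 2)) *
          ((γ - 1) * deriv (deriv V) r + (((N : ℝ) - 1) / r) * deriv V r) =
        lam / (γ - 1) ^ (γ - 1) * (V r + 1) ^ (γ - 1) / r ^ γ := by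
  have hU : IsOpen (Set.Ioo (0:ℝ) R) := isOpen_Ioo
  set m : ℝ := q - (p - 1) with hmdef
  have hm0 : 0 < m := by simp only [hmdef]; linarith
  have hp0 : 0 < p - 1 := by linarith
  have hγm : γ - 1 = (p - 1) / m := by
    rw [hγ]; field_simp; simp only [hmdef]; ring
  have hc : 0 < γ - 1 := by rw [hγm]; positivity
  have hγm' : (γ - 1) * m = p - 1 := by rw [hγm]; field_simp
  have hmq : m * γ = q := by rw [hγ]; field_simp
  set g : ℝ → ℝ := fun τ => (-deriv v τ) ^ m with hgdef
  have hv1 : ContDiffOn ℝ 1 (deriv v) (Set.Ioo 0 R) := hv.deriv_of_isOpen hU (by norm_num)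
  have hvd : ∀ x ∈ Set.Ioo (0:ℝ) R, HasDerivAt (deriv v) (deriv (deriv v) x) x := fun x hx =>
    ((hv1.differentiableOn one_ne_zero x hx).differentiableAt (hU.mem_nhds hx)).hasDerivAt
  have hvc : ContinuousOn (deriv v) (Set.Ioo 0 R) := hv1.continuousOn
  have hgc : ContinuousOn g (Set.Ioo 0 R) := by
    apply ContinuousOn.rpow_const hvc.neg
    intro x hx; left; exact (neg_pos.mpr (hv' x hx)).ne'
  have hgpos : ∀ x ∈ Set.Ioo (0:ℝ) R, 0 < g x := fun x hx =>
    Real.rpow_pos_of_pos (neg_pos.mpr (hv' x hx)) m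
  have hw : ∀ x ∈ Set.Ioo (0:ℝ) R, HasDerivAt (fun u => ∫ τ in u..R, g τ) (-(g x)) x := by
    intro x hx
    have h1 : HasDerivAt (fun u => ∫ τ in R..u, g τ) (g x) x :=
      intervalIntegral.integral_hasDerivAt_right (hint x hx).symm
        (hgc.stronglyMeasurableAtFilter hU x hx)
        (hgc.continuousAt (hU.mem_nhds hx))
    have h2 := h1.neg
    have heq : (fun u => ∫ τ in u..R, g τ) = fun u => -∫ τ in R..u, g τ := by
      funext u; rw [intervalIntegral.integral_symm]
    rw [heq]; exact h2
  set E : ℝ → ℝ := fun x => Real.exp ((1 / (γ - 1)) * ∫ τ in x..R, g τ) with hEdef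
  have hE : ∀ x ∈ Set.Ioo (0:ℝ) R,
      HasDerivAt E (E x * ((1 / (γ - 1)) * (-(g x)))) x := fun x hx =>
    (((hw x hx).const_mul (1 / (γ - 1))).exp)
  have hVd : ∀ x ∈ Set.Ioo (0:ℝ) R,
      HasDerivAt V (E x * ((1 / (γ - 1)) * (-(g x)))) x := by
    intro x hx
    refine HasDerivAt.congr_of_eventuallyEq ((hE x hx).sub_const 1) ?_
    filter_upwards [hU.mem_nhds hx] with y hy
    exact hV y hy
  have hdV : ∀ x ∈ Set.Ioo (0:ℝ) R,
      deriv V x = E x * ((1 / (γ - 1)) * (-(g x))) := fun x hx => (hVd x hx).deriv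
  intro r hr
  have ha : 0 < -deriv v r := neg_pos.mpr (hv' r hr)
  set a : ℝ := -deriv v r with hadef
  set b : ℝ := -deriv (deriv v) r with hbdef
  have hvv : deriv (deriv v) r = -b := by rw [hbdef, neg_neg]
  have hEv : 0 < E r := by rw [hEdef]; exact Real.exp_pos _
  have hG : g r = a ^ m := by rw [hgdef]
  have hGpos : 0 < a ^ m := Real.rpow_pos_of_pos ha m
  -- second derivative
  have hg' : HasDerivAt g (b * m * a ^ (m - 1)) r := by
    have hs : HasDerivAt (fun u => -deriv v u) b r := by
      exact (hvd r hr).neg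
    exact hs.rpow_const (Or.inl ha.ne')
  have hΦ : HasDerivAt (fun u => E u * ((1 / (γ - 1)) * (-(g u))))
      ((E r * ((1 / (γ - 1)) * (-(g r)))) * ((1 / (γ - 1)) * (-(g r)))
        + E r * ((1 / (γ - 1)) * (-(b * m * a ^ (m - 1))))) r := by
    have := (hE r hr).mul (((hg' ).neg).const_mul (1 / (γ - 1)))
    exact this
  have hddV : deriv (deriv V) r =
      (E r * ((1 / (γ - 1)) * (-(g r)))) * ((1 / (γ - 1)) * (-(g r)))
        + E r * ((1 / (γ - 1)) * (-(b * m * a ^ (m - 1)))) := by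
    have heq : deriv V =ᶠ[nhds r] fun u => E u * ((1 / (γ - 1)) * (-(g u))) := by
      filter_upwards [hU.mem_nhds hr] with y hy
      exact hdV y hy
    rw [heq.deriv_eq, hΦ.deriv]
  have hVr : V r + 1 = E r := by rw [hV r hr, hEdef]; ring
  -- abs of deriv V
  have hdVr : deriv V r = -(E r * a ^ m / (γ - 1)) := by
    rw [hdV r hr, hG]; ring
  have habs : |deriv V r| = E r * a ^ m / (γ - 1) := by
    rw [hdVr, abs_neg, abs_of_pos (by positivity)]
  -- power identities
  have hpow : (E r * a ^ m / (γ - 1)) ^ (γ - 2)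
      = E r ^ (γ - 2) * a ^ (m * (γ - 2)) / (γ - 1) ^ (γ - 2) := by
    rw [Real.div_rpow (by positivity) hc.le, Real.mul_rpow hEv.le hGpos.le,
      ← Real.rpow_mul ha.le]
  have E1 : E r ^ (γ - 2) * E r = E r ^ (γ - 1) := by
    rw [show γ - 1 = γ - 2 + 1 by ring, Real.rpow_add_one hEv.ne']
  have C1 : (γ - 1) ^ (γ - 2) * (γ - 1) = (γ - 1) ^ (γ - 1) := by
    rw [← Real.rpow_add_one hc.ne']; congr 1; ring
  have A1 : a ^ (m * (γ - 2)) * (a ^ m * a ^ m) = a ^ q := by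
    rw [← Real.rpow_add ha, ← Real.rpow_add ha, ← hmq]; ring_nf
  have A2 : a ^ (m * (γ - 2)) * a ^ (m - 1) = a ^ (p - 2) := by
    rw [← Real.rpow_add ha]
    congr 1
    have : m * (γ - 2) + (m - 1) = m * γ - m - 1 := by ring
    rw [this, hmq]; simp only [hmdef]; ring
  have A3 : a ^ (m * (γ - 2)) * a ^ m = a ^ (p - 1) := by
    rw [← Real.rpow_add ha]
    congr 1
    have : m * (γ - 2) + m = m * γ - m := by ring
    rw [this, hmq]; simp only [hmdef]; ring
  -- the p-ODE rearranged
  have hODE : a ^ (m*(γ-2)) * (a^m * a^m) - (p - 1) * (a ^ (m*(γ-2)) * a^(m-1)) * b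
      - (((N:ℝ) - 1) / r) * (a ^ (m*(γ-2)) * a^m) = -(lam / r ^ γ) := by
    rw [A1, A2, A3]
    have h1 := hode r hr
    rw [hvv, show deriv v r = -a by rw [hadef, neg_neg]] at h1
    have hpa : a ^ (p - 2) * a = a ^ (p - 1) := by
      rw [show p - 1 = p - 2 + 1 by ring, Real.rpow_add_one ha.ne']
    simp only [neg_neg] at h1
    linear_combination -h1 + ((N:ℝ)-1)/r * hpa
  have hrpos : (0:ℝ) < r := hr.1
  have hrγ : (0:ℝ) < r ^ γ := Real.rpow_pos_of_pos hrpos γ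
  have hZ : (0:ℝ) < (γ - 1) ^ (γ - 2) := Real.rpow_pos_of_pos hc _
  -- solve for lam
  have hlam2 : lam = -(a ^ (m*(γ-2)) * (a^m * a^m) - ((γ-1)*m) * (a ^ (m*(γ-2)) * a^(m-1)) * b
      - (((N:ℝ) - 1) / r) * (a ^ (m*(γ-2)) * a^m)) * r ^ γ := by
    rw [hγm']
    have h2 : lam / r ^ γ = -(a ^ (m*(γ-2)) * (a^m * a^m) - (p - 1) * (a ^ (m*(γ-2)) * a^(m-1)) * b
      - (((N:ℝ) - 1) / r) * (a ^ (m*(γ-2)) * a^m)) := by linarith [hODE]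
    rw [← h2]; field_simp
  rw [habs, hddV, hdVr, hVr, hG, hpow, ← E1, ← C1, hlam2]
  field_simp
  ring
end

section
/- Let N ≥ 2 be an integer and 1 < p < N, and let q satisfy (p−1)·N/(N−1) < q < p, so that (N−1)q − N(p−1) > 0. Set K = ((q−(p−1))/(p−q)) · ( ((N−1)q − (p−1)N)/(q−(p−1)) )^{1/(q−(p−1))} and define u(r) = K·( r^{−(p−q)/(q−(p−1))} − 1 ) on (0,1). Then u' < 0 on (0,1), u(1) = 0, and u satisfies −(−u'(r))^{p−2}·((p−1)u''(r) + ((N−1)/r)·u'(r)) = (−u'(r))^q for all r ∈ (0,1). (Together with u ≡ 0, this exhibits two distinct nonnegative radially decreasing solutions of the problem with λ = 0.) -/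
/-- for `1 < p < N` and `(p−1)N/(N−1) < q < p`, the function
`u(r) = K(r^{−(p−q)/(q−(p−1))} − 1)` with
`K = ((q−(p−1))/(p−q))·(((N−1)q−(p−1)N)/(q−(p−1)))^{1/(q−(p−1))}`
is decreasing on `(0,1)`, vanishes at `1`, and satisfies
`−(−u')^{p−2}((p−1)u'' + ((N−1)/r)u') = (−u')^q` on `(0,1)`. -/
theorem stmt14 (N : ℕ) (hN : 2 ≤ N) (p q : ℝ) (hp1 : 1 < p) (hpN : p < N)
    (hq1 : (p - 1) * N / ((N : ℝ) - 1) < q) (hq2 : q < p)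
    (K : ℝ)
    (hK : K = ((q - (p - 1)) / (p - q)) *
      ((((N : ℝ) - 1) * q - (p - 1) * N) / (q - (p - 1))) ^ (1 / (q - (p - 1))))
    (u : ℝ → ℝ)
    (hu : u = fun r : ℝ => K * (r ^ (-((p - q) / (q - (p - 1)))) - 1)) :
    (∀ r ∈ Set.Ioo (0 : ℝ) 1, deriv u r < 0) ∧
    u 1 = 0 ∧
    ∀ r ∈ Set.Ioo (0 : ℝ) 1,
      -((-deriv u r) ^ (p - 2)) *
          ((p - 1) * deriv (deriv u) r + (((N : ℝ) - 1) / r) * deriv u r) =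
        (-deriv u r) ^ q := by
  have hN2 : (2:ℝ) ≤ (N:ℝ) := by exact_mod_cast hN
  have hN1 : (0:ℝ) < (N:ℝ) - 1 := by linarith
  have hpq : 0 < p - q := by linarith
  have hp0 : (0:ℝ) < p - 1 := by linarith
  have hq1' : (p - 1) * N < q * ((N:ℝ) - 1) := by
    rwa [div_lt_iff₀ hN1] at hq1
  have hs : 0 < q - (p - 1) := by nlinarith
  have hMnum : 0 < ((N:ℝ) - 1) * q - (p - 1) * N := by nlinarith
  set α : ℝ := (p - q) / (q - (p - 1)) with hαdef
  set M : ℝ := (((N : ℝ) - 1) * q - (p - 1) * N) / (q - (p - 1)) with hMdef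
  have hα : 0 < α := div_pos hpq hs
  have hM : 0 < M := div_pos hMnum hs
  set c : ℝ := K * α with hcdef
  have hc_eq : c = M ^ (1 / (q - (p - 1))) := by
    rw [hcdef, hK, hαdef]
    field_simp
  have hc : 0 < c := by
    rw [hc_eq]; exact Real.rpow_pos_of_pos hM _
  -- first derivative
  have hderiv : ∀ r : ℝ, 0 < r → deriv u r = -c * r ^ (-α - 1) := by
    intro r hr
    have h1 : HasDerivAt (fun x : ℝ => x ^ (-α)) ((-α) * r ^ (-α - 1)) r :=
      Real.hasDerivAt_rpow_const (Or.inl hr.ne')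
    have h2 : HasDerivAt u (K * ((-α) * r ^ (-α - 1))) r := by
      rw [hu]; exact (h1.sub_const 1).const_mul K
    rw [h2.deriv, hcdef]; ring
  -- second derivative
  have hderiv2 : ∀ r : ℝ, 0 < r →
      deriv (deriv u) r = c * ((α + 1) * r ^ (-α - 2)) := by
    intro r hr
    have hev : deriv u =ᶠ[nhds r] (fun x : ℝ => -c * x ^ (-α - 1)) :=
      Filter.eventuallyEq_of_mem (Ioi_mem_nhds hr) (fun x hx => hderiv x hx)
    rw [hev.deriv_eq]
    have h1 : HasDerivAt (fun x : ℝ => x ^ (-α - 1)) ((-α - 1) * r ^ (-α - 1 - 1)) r :=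
      Real.hasDerivAt_rpow_const (Or.inl hr.ne')
    have h2 : HasDerivAt (fun x : ℝ => -c * x ^ (-α - 1)) (-c * ((-α - 1) * r ^ (-α - 1 - 1))) r :=
      h1.const_mul (-c)
    rw [h2.deriv]
    have : -α - 1 - 1 = -α - 2 := by ring
    rw [this]; ring
  refine ⟨?_, ?_, ?_⟩
  · intro r hr
    rw [hderiv r hr.1]
    have := Real.rpow_pos_of_pos hr.1 (-α - 1)
    nlinarith
  · rw [hu]
    simp [Real.one_rpow]
  · intro r hr
    obtain ⟨hr0, hr1⟩ := hr
    rw [hderiv r hr0, hderiv2 r hr0]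
    have hX : (0:ℝ) < r ^ (-α - 1) := Real.rpow_pos_of_pos hr0 _
    have hneg : -(-c * r ^ (-α - 1)) = c * r ^ (-α - 1) := by ring
    rw [hneg]
    -- expand the rpow of products
    have hmul : ∀ t : ℝ, (c * r ^ (-α - 1)) ^ t = c ^ t * r ^ ((-α - 1) * t) := by
      intro t
      rw [Real.mul_rpow hc.le hX.le, ← Real.rpow_mul hr0.le]
    rw [hmul (p - 2), hmul q]
    -- (N-1)/r * r^(-α-1) = (N-1) * r^(-α-2)
    have hdivr : (((N:ℝ) - 1) / r) * (-c * r ^ (-α - 1)) = -((N:ℝ) - 1) * c * r ^ (-α - 2) := by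
      have : r ^ (-α - 2) = r ^ (-α - 1) * r⁻¹ := by
        have he : -α - 1 + -1 = -α - 2 := by ring
        rw [← Real.rpow_neg_one r, ← Real.rpow_add hr0, he]
      rw [this]; field_simp
    rw [hdivr]
    -- combine: goal is now an equation in c-powers and r-powers
    have hcoef : (p - 1) * (c * ((α + 1) * r ^ (-α - 2))) + -((N:ℝ) - 1) * c * r ^ (-α - 2)
        = -(M * (c * r ^ (-α - 2))) := by
      have hM' : (p - 1) * (α + 1) - ((N:ℝ) - 1) = -M := by
        rw [hαdef, hMdef]; field_simp; ring
      linear_combination (c * r ^ (-α - 2)) * hM'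
    rw [hcoef]
    -- exponent identity
    have hexp : (-α - 1) * (p - 2) + (-α - 2) = (-α - 1) * q := by
      rw [hαdef]; field_simp; ring
    have hrexp : r ^ ((-α - 1) * (p - 2)) * r ^ (-α - 2) = r ^ ((-α - 1) * q) := by
      rw [← Real.rpow_add hr0, hexp]
    -- c powers: c^(p-2) * M * c = c^q
    have hcs : c ^ (q - (p - 1)) = M := by
      rw [hc_eq, ← Real.rpow_mul hM.le, one_div_mul_cancel hs.ne', Real.rpow_one]
    have hcq : c ^ (p - 2) * M * c = c ^ q := by
      rw [← hcs, ← Real.rpow_add hc, ← Real.rpow_add_one hc.ne']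
      congr 1
      ring
    calc -(c ^ (p - 2) * r ^ ((-α - 1) * (p - 2))) * -(M * (c * r ^ (-α - 2)))
        = (c ^ (p - 2) * M * c) * (r ^ ((-α - 1) * (p - 2)) * r ^ (-α - 2)) := by ring
      _ = c ^ q * r ^ ((-α - 1) * q) := by rw [hcq, hrexp]
end
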